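/- Let A be a Banach algebra and f ∈ A* such that f(x_n y_n) → 0 for all weakly null sequences (x_n), (y_n) in A, but T_f is not completely continuous. Then there exist a sequence (w_n) in A that is equivalent to the unit vector basis of ℓ¹ and a weakly null sequence (u_n) in A such that f(u_m w_n) = δ_{mn} for all m ≥ n. -/

import Mathlib

open Filter Topology ENNReal

/-- A sequence is weakly null if `f (x n) → 0` for every continuous linear functional `f`. -/
def WeaklyNull {A : Type*} [NormedAddCommGroup A] [NormedSpace ℝ A] (x : ℕ → A) : Prop :=
  ∀ f : A →L[ℝ] ℝ, Tendsto (fun n => f (x n)) atTop (𝓝 0)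

/-- A sequence is weakly Cauchy if `f (x n)` converges for every continuous linear functional. -/
def WeaklyCauchy {A : Type*} [NormedAddCommGroup A] [NormedSpace ℝ A] (x : ℕ → A) : Prop :=
  ∀ f : A →L[ℝ] ℝ, ∃ L : ℝ, Tendsto (fun n => f (x n)) atTop (𝓝 L)

/-- `E ⊆ A*` is an L-set: `sup_{f ∈ E} |f (x n)| → 0` for every weakly null `x`. -/
def LSet {A : Type*} [NormedAddCommGroup A] [NormedSpace ℝ A] (E : Set (A →L[ℝ] ℝ)) : Prop :=
  ∀ x : ℕ → A, WeaklyNull x → ∀ ε > (0 : ℝ), ∃ N : ℕ, ∀ n ≥ N, ∀ f ∈ E, |f (x n)| < ε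

/-- A set is weakly precompact if every sequence in it has a weakly Cauchy subsequence. -/
def WeaklyPrecompact {A : Type*} [NormedAddCommGroup A] [NormedSpace ℝ A] (K : Set A) : Prop :=
  ∀ x : ℕ → A, (∀ n, x n ∈ K) → ∃ φ : ℕ → ℕ, StrictMono φ ∧ WeaklyCauchy (x ∘ φ)

/-- A map is completely continuous if it sends weakly null sequences to norm null sequences. -/
def CompletelyContinuous {A B : Type*} [NormedAddCommGroup A] [NormedSpace ℝ A]
    [NormedAddCommGroup B] (T : A → B) : Prop :=
  ∀ x : ℕ → A, WeaklyNull x → Tendsto (fun n => ‖T (x n)‖) atTop (𝓝 0)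

/-- The multiplication operator `T_f : A → A*`, `(T_f a) x = f (a * x)`. -/
noncomputable def Tf {A : Type*} [NormedRing A] [NormedAlgebra ℝ A]
    (f : A →L[ℝ] ℝ) (a : A) : A →L[ℝ] ℝ :=
  f.comp (ContinuousLinearMap.mul ℝ A a)

/-- The multiplication operator `S_f : A → A*`, `(S_f a) x = f (x * a)`. -/
noncomputable def Sf {A : Type*} [NormedRing A] [NormedAlgebra ℝ A]
    (f : A →L[ℝ] ℝ) (a : A) : A →L[ℝ] ℝ :=
  f.comp ((ContinuousLinearMap.mul ℝ A).flip a)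

/-- `w` is an ℓ¹-sequence: equivalent to the unit vector basis of ℓ¹. -/
def IsL1Sequence {A : Type*} [NormedAddCommGroup A] [NormedSpace ℝ A] (w : ℕ → A) : Prop :=
  ∃ c C : ℝ, 0 < c ∧ ∀ (s : Finset ℕ) (lam : ℕ → ℝ),
    c * ∑ n ∈ s, |lam n| ≤ ‖∑ n ∈ s, lam n • w n‖ ∧
      ‖∑ n ∈ s, lam n • w n‖ ≤ C * ∑ n ∈ s, |lam n|

/-- The Schur property: weakly convergent sequences are norm convergent. -/
def SchurProperty (A : Type*) [NormedAddCommGroup A] [NormedSpace ℝ A] : Prop :=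
  ∀ (x : ℕ → A) (L : A),
    (∀ f : A →L[ℝ] ℝ, Tendsto (fun n => f (x n)) atTop (𝓝 (f L))) →
      Tendsto x atTop (𝓝 L)


namespace RosAux

/-- dependent-choice helper -/
lemma dc' {α : Type*} (init : α) (R : ℕ → α → α → Prop) (h : ∀ k a, ∃ b, R k a b) :
    ∃ g : ℕ → α, g 0 = init ∧ ∀ k, R k (g k) (g (k+1)) := by
  choose F hF using h
  refine ⟨fun n => Nat.rec init (fun k a => F k a) n, rfl, fun k => ?_⟩
  exact hF k _

variable {S : Type*} (P Q : ℕ → Set S)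

/-- `x` is in `P n` infinitely often and in `Q n` infinitely often, along `M`. -/
def DL (M : Set ℕ) (x : S) : Prop :=
  {n | n ∈ M ∧ x ∈ P n}.Infinite ∧ {n | n ∈ M ∧ x ∈ Q n}.Infinite

/-- `D` is large along `M`. -/
def Lg (D : Set S) (M : Set ℕ) : Prop :=
  ∀ M' ⊆ M, M'.Infinite → ∃ x ∈ D, DL P Q M' x

variable {P Q}

lemma DL.mono {M M' : Set ℕ} {x : S} (h : DL P Q M x) (hMM : M ⊆ M') : DL P Q M' x :=
  ⟨h.1.mono (fun n hn => ⟨hMM hn.1, hn.2⟩), h.2.mono (fun n hn => ⟨hMM hn.1, hn.2⟩)⟩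

lemma Lg.monoD {D D' : Set S} {M : Set ℕ} (h : Lg P Q D M) (hDD : D ⊆ D') : Lg P Q D' M :=
  fun M' hM' hI => by obtain ⟨x, hx, hd⟩ := h M' hM' hI; exact ⟨x, hDD hx, hd⟩

lemma Lg.monoM {D : Set S} {M M' : Set ℕ} (h : Lg P Q D M) (hMM : M' ⊆ M) : Lg P Q D M' :=
  fun M'' hM'' hI => h M'' (hM''.trans hMM) hI

lemma not_lg_iff {D : Set S} {M : Set ℕ} :
    ¬ Lg P Q D M ↔ ∃ M' ⊆ M, M'.Infinite ∧ ∀ x ∈ D, ¬ DL P Q M' x := by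
  unfold Lg; push_neg; rfl


/-- The key extension lemma. -/
lemma extension {ι : Type*} [Finite ι] (D : ι → Set S) (M : Set ℕ) (hM : M.Infinite)
    (hD : ∀ i, Lg P Q (D i) M) :
    ∃ n ∈ M, ∃ M', M' ⊆ M ∧ M'.Infinite ∧ (∀ k ∈ M', n < k) ∧
      ∀ i, Lg P Q (D i ∩ P n) M' ∧ Lg P Q (D i ∩ Q n) M' := by
  by_contra hcon
  push_neg at hcon
  set C : Bool → ℕ → Set S := fun b => bif b then P else Q with hC
  have hstep0 : ∀ T : Set ℕ, T ⊆ M → T.Infinite →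
      ∃ (n : ℕ) (M'' : Set ℕ) (i : ι) (b : Bool), n ∈ T ∧ M'' ⊆ T ∧ M''.Infinite ∧
        (∀ k ∈ M'', n < k) ∧ ∀ x ∈ D i ∩ C b n, ¬ DL P Q M'' x := by
    intro T hsub hinf
    obtain ⟨n, hn⟩ := hinf.nonempty
    have hM' : {j | j ∈ T ∧ n < j}.Infinite := by
      have hsb : T ⊆ {j | j ∈ T ∧ n < j} ∪ {j | j ≤ n} := by
        intro j hj; by_cases h : n < j
        · exact Or.inl ⟨hj, h⟩
        · exact Or.inr (not_lt.mp h)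
      by_contra hfin
      rw [Set.not_infinite] at hfin
      exact hinf ((hfin.union (Set.finite_Iic n)).subset hsb)
    have hsub' : {j | j ∈ T ∧ n < j} ⊆ M := fun j hj => hsub hj.1
    obtain ⟨i, hi⟩ := hcon n (hsub hn) _ hsub' hM' (fun k hk => hk.2)
    by_cases hP : Lg P Q (D i ∩ P n) {j | j ∈ T ∧ n < j}
    · obtain ⟨M'', h1, h2, h3⟩ := not_lg_iff.mp (hi hP)
      exact ⟨n, M'', i, false, hn, h1.trans (fun j hj => hj.1), h2,
        fun k hk => (h1 hk).2, by simpa [hC] using h3⟩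
    · obtain ⟨M'', h1, h2, h3⟩ := not_lg_iff.mp hP
      exact ⟨n, M'', i, true, hn, h1.trans (fun j hj => hj.1), h2,
        fun k hk => (h1 hk).2, by simpa [hC] using h3⟩
  obtain ⟨n0, M0, i0, b0, _, hM0sub, hM0inf, _, _⟩ := hstep0 M (le_refl M) hM
  -- state: (n, Msub, i, b)
  let α := {q : ℕ × Set ℕ × ι × Bool // q.2.1 ⊆ M ∧ q.2.1.Infinite}
  have step : ∀ (k : ℕ) (s : α), ∃ s' : α,
      s'.1.1 ∈ s.1.2.1 ∧ s'.1.2.1 ⊆ s.1.2.1 ∧ (∀ k ∈ s'.1.2.1, s'.1.1 < k) ∧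
      (∀ x ∈ D s'.1.2.2.1 ∩ C s'.1.2.2.2 s'.1.1, ¬ DL P Q s'.1.2.1 x) := by
    intro k s
    obtain ⟨n, M'', i, b, hn, h1, h2, h3, h4⟩ := hstep0 s.1.2.1 s.2.1 s.2.2
    exact ⟨⟨(n, M'', i, b), h1.trans s.2.1, h2⟩, hn, h1, h3, h4⟩
  obtain ⟨g, hg0, hgs⟩ := dc' (⟨(n0, M, i0, b0), le_refl M, hM⟩ : α) _ step
  set nn : ℕ → ℕ := fun k => (g (k+1)).1.1 with hnn
  set MM : ℕ → Set ℕ := fun k => (g (k+1)).1.2.1 with hMM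
  set ii : ℕ → ι := fun k => (g (k+1)).1.2.2.1 with hii
  set bb : ℕ → Bool := fun k => (g (k+1)).1.2.2.2 with hbb
  have hmemM : ∀ k, MM k ⊆ M := fun k => (g (k+1)).2.1
  have hbad : ∀ k, ∀ x ∈ D (ii k) ∩ C (bb k) (nn k), ¬ DL P Q (MM k) x := fun k => (hgs k).2.2.2
  have hchain : ∀ k, MM (k+1) ⊆ MM k := fun k => (hgs (k+1)).2.1
  have hmono : ∀ k l, k ≤ l → MM l ⊆ MM k := by
    intro k l hkl
    induction l with
    | zero => rw [Nat.le_zero.mp hkl]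
    | succ l ih =>
      rcases Nat.lt_or_ge k (l+1) with h | h
      · exact (hchain l).trans (ih (Nat.lt_succ_iff.mp h))
      · rw [Nat.le_antisymm hkl h]
  have hnnM : ∀ k, nn (k+1) ∈ MM k := fun k => (hgs (k+1)).1
  have hgt : ∀ k, ∀ j ∈ MM k, nn k < j := fun k => (hgs k).2.2.1
  have hnmono : StrictMono nn := strictMono_nat_of_lt_succ (fun k => hgt k _ (hnnM k))
  -- tail ⊆ MM k
  have htail : ∀ k j, k < j → nn j ∈ MM k := by
    intro k j hkj
    rcases j with _ | j
    · omega
    · exact hmono k j (Nat.lt_succ_iff.mp hkj) (hnnM j)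
  -- pigeonhole
  obtain ⟨⟨i, b⟩, hfib⟩ : ∃ p : ι × Bool, ((fun k => (ii k, bb k)) ⁻¹' {p}).Infinite := by
    obtain ⟨p, hp⟩ := Finite.exists_infinite_fiber (fun k => (ii k, bb k))
    exact ⟨p, Set.infinite_coe_iff.mp hp⟩
  set K : Set ℕ := (fun k => (ii k, bb k)) ⁻¹' {(i, b)} with hK
  have hKinf : K.Infinite := hfib
  have hKi : ∀ k ∈ K, ii k = i ∧ bb k = b := by
    intro k hk
    have : (ii k, bb k) = (i, b) := hk
    exact ⟨congrArg Prod.fst this, congrArg Prod.snd this⟩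
  set K' : Set ℕ := nn '' K with hK'
  have hK'inf : K'.Infinite := hKinf.image (hnmono.injective.injOn)
  have hK'sub : K' ⊆ M := by
    rintro _ ⟨k, _, rfl⟩
    rcases k with _ | k
    · exact (g 0).2.1 ((hgs 0).1)
    · exact hmemM k (hnnM k)
  obtain ⟨x, hxD, hxP, hxQ⟩ := hD i K' hK'sub hK'inf
  -- find k ∈ K with x ∈ C b (nn k)
  have hCb : {n_1 | n_1 ∈ K' ∧ x ∈ C b n_1}.Infinite := by
    cases b
    · simpa [hC] using hxQ
    · simpa [hC] using hxP
  obtain ⟨m, ⟨hmK', hmC⟩⟩ := hCb.nonempty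
  obtain ⟨k, hkK, rfl⟩ := hmK'
  -- x contradicts badness at stage k
  refine hbad k x ⟨?_, ?_⟩ ⟨?_, ?_⟩
  · rwa [(hKi k hkK).1]
  · rwa [(hKi k hkK).2]
  · refine (hxP.diff ((Set.finite_Iic k).image nn)).mono ?_
    rintro m ⟨⟨hmK', hmP⟩, hnot⟩
    obtain ⟨l, hlK, rfl⟩ := hmK'
    have hlk : k < l := by
      by_contra h
      exact hnot ⟨l, not_lt.mp h, rfl⟩
    exact ⟨htail k l hlk, hmP⟩
  · refine (hxQ.diff ((Set.finite_Iic k).image nn)).mono ?_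
    rintro m ⟨⟨hmK', hmQ⟩, hnot⟩
    obtain ⟨l, hlK, rfl⟩ := hmK'
    have hlk : k < l := by
      by_contra h
      exact hnot ⟨l, not_lt.mp h, rfl⟩
    exact ⟨htail k l hlk, hmQ⟩


variable (P Q) in
/-- auxiliary pattern set -/
def Dset (F F' : Finset ℕ) : Set S := (⋂ n ∈ F', P n) ∩ ⋂ n ∈ F \ F', Q n

lemma mem_Dset {F F' : Finset ℕ} {x : S} :
    x ∈ Dset P Q F F' ↔ (∀ m ∈ F', x ∈ P m) ∧ ∀ m ∈ F \ F', x ∈ Q m := by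
  simp [Dset]

variable (P Q) in
/-- invariant for the construction -/
def Inv (M0 : Set ℕ) (q : Finset ℕ × Set ℕ) : Prop :=
  q.2 ⊆ M0 ∧ q.2.Infinite ∧ (∀ a ∈ q.1, ∀ k ∈ q.2, a < k) ∧
    ∀ F' ∈ q.1.powerset, Lg P Q (Dset P Q q.1 F') q.2

/-- Main construction: from largeness of `univ`, extract an independent subsequence. -/
lemma exists_indep (M0 : Set ℕ) (h0 : M0.Infinite) (hL : Lg P Q Set.univ M0) :
    ∃ T ⊆ M0, T.Infinite ∧ ∀ F : Finset ℕ, ↑F ⊆ T → ∀ σ : ℕ → Bool,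
      (⋂ n ∈ F, (bif σ n then P n else Q n)).Nonempty := by
  classical
  have init : Inv P Q M0 ((∅ : Finset ℕ), M0) := by
    refine ⟨le_refl M0, h0, by simp, ?_⟩
    intro F' hF'
    simp only [Finset.mem_powerset, Finset.subset_empty] at hF'
    subst hF'
    have hD : Dset P Q ∅ ∅ = Set.univ := by simp [Dset]
    rw [hD]; exact hL
  have step : ∀ (k : ℕ) (s : {q : Finset ℕ × Set ℕ // Inv P Q M0 q}),
      ∃ s' : {q : Finset ℕ × Set ℕ // Inv P Q M0 q},
      ∃ n ∈ s.1.2, s'.1.1 = insert n s.1.1 ∧ s'.1.2 ⊆ s.1.2 := by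
    intro k s
    obtain ⟨hsubM0, hinf, hord, hlg⟩ := s.2
    obtain ⟨n, hnM, M', hM'sub, hM'inf, hM'gt, hM'lg⟩ :=
      extension (ι := {F' // F' ∈ s.1.1.powerset}) (fun F' => Dset P Q s.1.1 F'.1) s.1.2 hinf
        (fun F' => hlg F'.1 F'.2)
    have hnotF : n ∉ s.1.1 := fun hn => lt_irrefl n (hord n hn n hnM)
    refine ⟨⟨(insert n s.1.1, M'), hM'sub.trans hsubM0, hM'inf, ?_, ?_⟩, n, hnM, rfl, hM'sub⟩
    · intro a ha k hk
      rcases Finset.mem_insert.mp ha with rfl | ha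
      · exact hM'gt k hk
      · exact hord a ha k (hM'sub hk)
    · intro F' hF'
      rw [Finset.mem_powerset] at hF'
      by_cases hnF' : n ∈ F'
      · have hF'' : F'.erase n ∈ s.1.1.powerset := by
          rw [Finset.mem_powerset]
          intro m hm
          have hmm := hF' (Finset.mem_of_mem_erase hm)
          rcases Finset.mem_insert.mp hmm with rfl | h
          · exact absurd rfl (Finset.ne_of_mem_erase hm)
          · exact h
        refine ((hM'lg ⟨F'.erase n, hF''⟩).1).monoD ?_
        rintro x ⟨hx, h3⟩
        rw [mem_Dset] at hx
        obtain ⟨h1, h2⟩ := hx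
        rw [mem_Dset]
        constructor
        · intro m hm
          by_cases hmn : m = n
          · subst hmn; exact h3
          · exact h1 m (Finset.mem_erase.mpr ⟨hmn, hm⟩)
        · intro m hm
          rw [Finset.mem_sdiff, Finset.mem_insert] at hm
          obtain ⟨hm1, hm2⟩ := hm
          rcases hm1 with rfl | hm1
          · exact absurd hnF' hm2
          · refine h2 m (Finset.mem_sdiff.mpr ⟨hm1, fun h => hm2 ?_⟩)
            exact Finset.mem_of_mem_erase h
      · have hF'p : F' ∈ s.1.1.powerset := by
          rw [Finset.mem_powerset]
          intro m hm
          rcases Finset.mem_insert.mp (hF' hm) with rfl | h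
          · exact absurd hm hnF'
          · exact h
        refine ((hM'lg ⟨F', hF'p⟩).2).monoD ?_
        rintro x ⟨hx, h3⟩
        rw [mem_Dset] at hx
        obtain ⟨h1, h2⟩ := hx
        rw [mem_Dset]
        refine ⟨h1, ?_⟩
        intro m hm
        rw [Finset.mem_sdiff, Finset.mem_insert] at hm
        obtain ⟨hm1, hm2⟩ := hm
        rcases hm1 with rfl | hm1
        · exact h3
        · exact h2 m (Finset.mem_sdiff.mpr ⟨hm1, hm2⟩)
  obtain ⟨g, hg0, hgs⟩ := dc' (⟨(∅, M0), init⟩ : {q : Finset ℕ × Set ℕ // Inv P Q M0 q}) _ step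
  have hFmono : ∀ k, (g k).1.1 ⊆ (g (k+1)).1.1 := by
    intro k
    obtain ⟨n, _, heq, _⟩ := hgs k
    rw [heq]
    exact Finset.subset_insert n _
  have hFmono' : ∀ k l, k ≤ l → (g k).1.1 ⊆ (g l).1.1 := by
    intro k l hkl
    induction l with
    | zero => rw [Nat.le_zero.mp hkl]
    | succ l ih =>
      rcases Nat.lt_or_ge k (l+1) with h | h
      · exact (ih (Nat.lt_succ_iff.mp h)).trans (hFmono l)
      · rw [Nat.le_antisymm hkl h]
  have hcard : ∀ k, (g k).1.1.card = k := by
    intro k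
    induction k with
    | zero => simp [hg0]
    | succ k ih =>
      obtain ⟨n, hnM, heq, _⟩ := hgs k
      have hnot : n ∉ (g k).1.1 := fun hn => lt_irrefl n ((g k).2.2.2.1 n hn n hnM)
      rw [heq, Finset.card_insert_of_notMem hnot, ih]
  have hFM0 : ∀ k, ((g k).1.1 : Set ℕ) ⊆ M0 := by
    intro k
    induction k with
    | zero => rw [hg0]; simp
    | succ k ih =>
      obtain ⟨n, hnM, heq, _⟩ := hgs k
      rw [heq]
      intro m hm
      rcases Finset.mem_insert.mp hm with rfl | hm
      · exact (g k).2.1 hnM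
      · exact ih hm
  refine ⟨⋃ k, ((g k).1.1 : Set ℕ), Set.iUnion_subset hFM0, ?_, ?_⟩
  · intro hfin
    have hk : ∀ k, (g k).1.1 ⊆ hfin.toFinset := by
      intro k m hm
      rw [Set.Finite.mem_toFinset]
      exact Set.mem_iUnion.mpr ⟨k, hm⟩
    have := Finset.card_le_card (hk (hfin.toFinset.card + 1))
    rw [hcard] at this
    omega
  · intro F hFT σ
    -- find k with F ⊆ (g k).1.1
    have hex : ∃ k, F ⊆ (g k).1.1 := by
      induction F using Finset.induction_on with
      | empty => exact ⟨0, Finset.empty_subset _⟩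
      | @insert a F ha ih =>
        have hsub : (F : Set ℕ) ⊆ ⋃ k, ((g k).1.1 : Set ℕ) := by
          refine subset_trans ?_ hFT
          intro m hm; simp only [Finset.coe_insert, Set.mem_insert_iff]; exact Or.inr hm
        obtain ⟨k1, hk1⟩ := ih hsub
        have haT : a ∈ ⋃ k, ((g k).1.1 : Set ℕ) := hFT (by simp)
        obtain ⟨k2, hk2⟩ := Set.mem_iUnion.mp haT
        refine ⟨max k1 k2, ?_⟩
        intro m hm
        rcases Finset.mem_insert.mp hm with rfl | hm
        · exact hFmono' k2 _ (le_max_right k1 k2) hk2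
        · exact hFmono' k1 _ (le_max_left k1 k2) (hk1 hm)
    obtain ⟨k, hk⟩ := hex
    set F1 : Finset ℕ := (g k).1.1.filter (fun n => σ n = true) with hF1
    have hF1p : F1 ∈ (g k).1.1.powerset := Finset.mem_powerset.mpr (Finset.filter_subset _ _)
    obtain ⟨x, hx, _⟩ := (g k).2.2.2.2 F1 hF1p (g k).1.2 (le_refl _) (g k).2.2.1
    rw [mem_Dset] at hx
    obtain ⟨h1, h2⟩ := hx
    refine ⟨x, ?_⟩
    simp only [Set.mem_iInter₂]
    intro n hn
    cases hσ : σ n with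
    | true =>
      simp only [cond_true]
      exact h1 n (Finset.mem_filter.mpr ⟨hk hn, hσ⟩)
    | false =>
      simp only [cond_false]
      refine h2 n (Finset.mem_sdiff.mpr ⟨hk hn, fun h => ?_⟩)
      rw [(Finset.mem_filter.mp h).2] at hσ
      exact Bool.true_eq_false.mp hσ


section PartB

variable {A : Type*} [NormedAddCommGroup A] [NormedSpace ℝ A]

lemma rosenthal_l1 (b : ℕ → A) (hb : ∀ n, ‖b n‖ ≤ 1)
    (hnwc : ∀ m : ℕ → ℕ, StrictMono m → ¬ WeaklyCauchy (fun k => b (m k))) :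
    ∃ r s : ℝ, r < s ∧ ∃ T : Set ℕ, T.Infinite ∧
      ∀ F : Finset ℕ, ↑F ⊆ T → ∀ σ : ℕ → Bool,
        ∃ g : A →L[ℝ] ℝ, ‖g‖ ≤ 1 ∧ ∀ n ∈ F,
          (σ n = true → s < g (b n)) ∧ (σ n = false → g (b n) < r) := by
  classical
  by_contra hcon
  obtain ⟨e, hesurj⟩ : ∃ f : ℕ → ℚ × ℚ, Function.Surjective f := exists_surjective_nat _
  set Pk : ℕ → ℕ → Set (A →L[ℝ] ℝ) := fun k n => {g | ‖g‖ ≤ 1 ∧ ((e k).2 : ℝ) < g (b n)} with hPk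
  set Qk : ℕ → ℕ → Set (A →L[ℝ] ℝ) := fun k n => {g | ‖g‖ ≤ 1 ∧ g (b n) < ((e k).1 : ℝ)} with hQk
  have key : ∀ k, ∀ M : Set ℕ, M.Infinite → (((e k).1 : ℝ) < ((e k).2 : ℝ)) →
      ∃ N ⊆ M, N.Infinite ∧ ∀ x : A →L[ℝ] ℝ, ¬ DL (Pk k) (Qk k) N x := by
    intro k M hM hrs
    by_cases hlg : Lg (Pk k) (Qk k) Set.univ M
    · exfalso
      obtain ⟨T, hTM, hTinf, hind⟩ := exists_indep (P := Pk k) (Q := Qk k) M hM hlg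
      refine hcon ⟨((e k).1 : ℝ), ((e k).2 : ℝ), hrs, T, hTinf, ?_⟩
      intro F hFT σ
      obtain ⟨g, hg⟩ := hind F hFT σ
      rcases Finset.eq_empty_or_nonempty F with rfl | ⟨n0, hn0⟩
      · exact ⟨0, by simp, by simp⟩
      · have hgnorm : ‖g‖ ≤ 1 := by
          have hgm := Set.mem_iInter₂.mp hg n0 hn0
          cases hσ : σ n0 with
          | true => rw [hσ] at hgm; exact hgm.1
          | false => rw [hσ] at hgm; exact hgm.1
        refine ⟨g, hgnorm, ?_⟩
        intro n hn
        have hgm := Set.mem_iInter₂.mp hg n hn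
        constructor
        · intro hσ; rw [hσ] at hgm; exact hgm.2
        · intro hσ; rw [hσ] at hgm; exact hgm.2
    · rw [not_lg_iff] at hlg
      obtain ⟨N, hNM, hNinf, hbad⟩ := hlg
      exact ⟨N, hNM, hNinf, fun x => hbad x (Set.mem_univ x)⟩
  -- diagonalize
  have step : ∀ (k : ℕ) (s : {N : Set ℕ // N.Infinite}), ∃ s' : {N : Set ℕ // N.Infinite},
      s'.1 ⊆ s.1 ∧ ((((e k).1 : ℝ) < ((e k).2 : ℝ)) →
        ∀ x : A →L[ℝ] ℝ, ¬ DL (Pk k) (Qk k) s'.1 x) := by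
    intro k s
    by_cases hrs : ((e k).1 : ℝ) < ((e k).2 : ℝ)
    · obtain ⟨N, hNM, hNinf, hbad⟩ := key k s.1 s.2 hrs
      exact ⟨⟨N, hNinf⟩, hNM, fun _ => hbad⟩
    · exact ⟨s, le_refl _, fun h => absurd h hrs⟩
  obtain ⟨gN, hgN0, hgNs⟩ := dc' (⟨Set.univ, Set.infinite_univ⟩ : {N : Set ℕ // N.Infinite}) _ step
  have hNmono : ∀ k l, k ≤ l → (gN l).1 ⊆ (gN k).1 := by
    intro k l hkl
    induction l with
    | zero => rw [Nat.le_zero.mp hkl]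
    | succ l ih =>
      rcases Nat.lt_or_ge k (l+1) with h | h
      · exact ((hgNs l).1).trans (ih (Nat.lt_succ_iff.mp h))
      · rw [Nat.le_antisymm hkl h]
  -- diagonal sequence
  obtain ⟨m0, hm0⟩ := (gN 0).2.nonempty
  have mstep : ∀ (k : ℕ) (v : {q : ℕ // q ∈ (gN k).1}), ∃ v' : {q : ℕ // q ∈ (gN (k+1)).1}, v.1 < v'.1 := by
    intro k v
    obtain ⟨w, hw, hvw⟩ := (gN (k+1)).2.exists_gt v.1
    exact ⟨⟨w, hw⟩, hvw⟩
  -- build m by recursion; use a dependent choice over sigma type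
  have mrec : ∃ m : ℕ → ℕ, StrictMono m ∧ ∀ k, m k ∈ (gN k).1 := by
    let β := {p : ℕ × ℕ // p.2 ∈ (gN p.1).1}
    have bstep : ∀ (k : ℕ) (s : β), ∃ s' : β, s'.1.1 = s.1.1 + 1 ∧ s.1.2 < s'.1.2 := by
      intro k s
      obtain ⟨w, hw, hvw⟩ := (gN (s.1.1+1)).2.exists_gt s.1.2
      exact ⟨⟨(s.1.1+1, w), hw⟩, rfl, hvw⟩
    obtain ⟨gm, hgm0, hgms⟩ := dc' (⟨(0, m0), hm0⟩ : β) _ bstep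
    have hfst : ∀ k, (gm k).1.1 = k := by
      intro k
      induction k with
      | zero => rw [hgm0]
      | succ k ih => rw [(hgms k).1, ih]
    refine ⟨fun k => (gm k).1.2, strictMono_nat_of_lt_succ (fun k => (hgms k).2), fun k => ?_⟩
    have := (gm k).2
    rwa [hfst k] at this
  obtain ⟨m, hmmono, hmm⟩ := mrec
  have hmem : ∀ k j, k ≤ j → m j ∈ (gN k).1 := fun k j hkj => hNmono k j hkj (hmm j)
  -- the subsequence is weakly Cauchy: contradiction
  refine hnwc m hmmono ?_
  intro gg
  rcases eq_or_ne gg 0 with rfl | hgg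
  · exact ⟨0, by simp [tendsto_const_nhds]⟩
  · set g1 : A →L[ℝ] ℝ := ‖gg‖⁻¹ • gg with hg1def
    have hng : (0:ℝ) < ‖gg‖ := norm_pos_iff.mpr hgg
    have hg1norm : ‖g1‖ ≤ 1 := by
      rw [hg1def]
      calc ‖(‖gg‖⁻¹ • gg : A →L[ℝ] ℝ)‖ ≤ ‖(‖gg‖⁻¹ : ℝ)‖ * ‖gg‖ :=
            ContinuousLinearMap.opNorm_smul_le _ _
        _ = 1 := by
            rw [Real.norm_eq_abs, abs_of_nonneg (inv_nonneg.mpr hng.le), inv_mul_cancel₀ hng.ne']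
    set u : ℕ → ℝ := fun j => g1 (b (m j)) with hu
    have hub : ∀ j, |u j| ≤ 1 := by
      intro j
      calc |u j| ≤ ‖g1‖ * ‖b (m j)‖ := g1.le_opNorm _
        _ ≤ 1 * 1 := by
            apply mul_le_mul hg1norm (hb _) (norm_nonneg _) zero_le_one
        _ = 1 := one_mul 1
    have hbdd1 : Filter.IsBoundedUnder (· ≤ ·) atTop u :=
      ⟨1, Filter.eventually_map.mpr (Filter.Eventually.of_forall (fun j => (abs_le.mp (hub j)).2))⟩
    have hbdd2 : Filter.IsBoundedUnder (· ≥ ·) atTop u :=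
      ⟨-1, Filter.eventually_map.mpr (Filter.Eventually.of_forall (fun j => (abs_le.mp (hub j)).1))⟩
    have heq : Filter.liminf u atTop = Filter.limsup u atTop := by
      refine le_antisymm (liminf_le_limsup hbdd1 hbdd2) ?_
      by_contra hlt
      push_neg at hlt
      obtain ⟨q1, hq1a, hq1b⟩ := exists_rat_btwn hlt
      obtain ⟨q2, hq2a, hq2b⟩ := exists_rat_btwn hq1b
      have hfreq1 : ∃ᶠ j in atTop, u j < (q1 : ℝ) :=
        frequently_lt_of_liminf_lt hbdd1.isCoboundedUnder_ge hq1a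
      have hfreq2 : ∃ᶠ j in atTop, (q2 : ℝ) < u j :=
        frequently_lt_of_lt_limsup hbdd2.isCoboundedUnder_le hq2b
      obtain ⟨k0, hek0⟩ := hesurj (q1, q2)
      have hrs : ((e k0).1 : ℝ) < ((e k0).2 : ℝ) := by rw [hek0]; exact_mod_cast hq2a
      have hbad := (hgNs k0).2 hrs g1
      apply hbad
      constructor
      · -- infinitely many n in gN (k0+1) with g1 ∈ Pk k0 n
        have hinf2 : {j | (q2:ℝ) < u j}.Infinite := Nat.frequently_atTop_iff_infinite.mp hfreq2
        refine ((hinf2.diff (Set.finite_Iio (k0+1))).image (hmmono.injective.injOn)).mono ?_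
        rintro _ ⟨j, ⟨hj2, hj1⟩, rfl⟩
        simp only [Set.mem_Iio, not_lt] at hj1
        refine ⟨hmem (k0+1) j hj1, hg1norm, ?_⟩
        rw [hek0]
        exact hj2
      · have hinf1 : {j | u j < (q1:ℝ)}.Infinite := Nat.frequently_atTop_iff_infinite.mp hfreq1
        refine ((hinf1.diff (Set.finite_Iio (k0+1))).image (hmmono.injective.injOn)).mono ?_
        rintro _ ⟨j, ⟨hj2, hj1⟩, rfl⟩
        simp only [Set.mem_Iio, not_lt] at hj1
        refine ⟨hmem (k0+1) j hj1, hg1norm, ?_⟩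
        rw [hek0]
        exact hj2
    have htend : Filter.Tendsto u atTop (𝓝 (Filter.limsup u atTop)) :=
      tendsto_of_liminf_eq_limsup heq rfl hbdd1 hbdd2
    refine ⟨‖gg‖ * Filter.limsup u atTop, ?_⟩
    have hcalc : ∀ j, gg (b (m j)) = ‖gg‖ * u j := by
      intro j
      rw [hu]
      simp only [hg1def, ContinuousLinearMap.smul_apply, smul_eq_mul]
      rw [← mul_assoc, mul_inv_cancel₀ hng.ne', one_mul]
    simp only [hcalc]
    exact htend.const_mul ‖gg‖

lemma l1_of_indep (b : ℕ → A) (hb : ∀ n, ‖b n‖ ≤ 1) {r s : ℝ} (hrs : r < s)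
    {T : Set ℕ}
    (hind : ∀ F : Finset ℕ, ↑F ⊆ T → ∀ σ : ℕ → Bool,
      ∃ g : A →L[ℝ] ℝ, ‖g‖ ≤ 1 ∧ ∀ n ∈ F,
        (σ n = true → s < g (b n)) ∧ (σ n = false → g (b n) < r))
    (ρ : ℕ → ℕ) (hρi : Function.Injective ρ) (hρT : ∀ k, ρ k ∈ T) :
    IsL1Sequence (fun k => b (ρ k)) := by
  classical
  refine ⟨(s - r)/2, 1, by linarith, ?_⟩
  intro sf lam
  constructor
  · -- lower ℓ¹ bound
    set F : Finset ℕ := sf.image ρ with hF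
    have hFT : ↑F ⊆ T := by
      intro n hn
      simp only [hF, Finset.coe_image, Set.mem_image, Finset.mem_coe] at hn
      obtain ⟨k, _, rfl⟩ := hn
      exact hρT k
    set σ : ℕ → Bool := fun n => decide (∃ k ∈ sf, ρ k = n ∧ 0 ≤ lam k) with hσ
    obtain ⟨g1, hg1n, hg1⟩ := hind F hFT σ
    obtain ⟨g2, hg2n, hg2⟩ := hind F hFT (fun n => !(σ n))
    have hσval : ∀ k ∈ sf, (σ (ρ k) = true ↔ 0 ≤ lam k) := by
      intro k hk
      rw [hσ, decide_eq_true_eq]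
      constructor
      · rintro ⟨k', hk', heq, hle⟩
        rwa [hρi heq] at hle
      · intro h
        exact ⟨k, hk, rfl, h⟩
    have key : ∀ k ∈ sf, |lam k| * (s - r) ≤ lam k * (g1 (b (ρ k)) - g2 (b (ρ k))) := by
      intro k hk
      have h1 := hg1 (ρ k) (Finset.mem_image_of_mem ρ hk)
      have h2 := hg2 (ρ k) (Finset.mem_image_of_mem ρ hk)
      by_cases h : 0 ≤ lam k
      · have hσt : σ (ρ k) = true := (hσval k hk).mpr h
        have hv : s < g1 (b (ρ k)) := h1.1 hσt
        have hw : g2 (b (ρ k)) < r := h2.2 (by rw [hσt]; rfl)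
        rw [abs_of_nonneg h]
        have hd : s - r ≤ g1 (b (ρ k)) - g2 (b (ρ k)) := by linarith
        exact mul_le_mul_of_nonneg_left hd h
      · push_neg at h
        have hσf : σ (ρ k) = false := by
          rw [← Bool.not_eq_true]
          intro hc
          exact absurd ((hσval k hk).mp hc) (not_le.mpr h)
        have hv : g1 (b (ρ k)) < r := h1.2 hσf
        have hw : s < g2 (b (ρ k)) := h2.1 (by rw [hσf]; rfl)
        rw [abs_of_neg h]
        nlinarith
    set Sv : A := ∑ k ∈ sf, lam k • b (ρ k) with hSv
    have hsum : ∑ k ∈ sf, lam k * (g1 (b (ρ k)) - g2 (b (ρ k))) = g1 Sv - g2 Sv := by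
      rw [hSv, map_sum, map_sum, ← Finset.sum_sub_distrib]
      refine Finset.sum_congr rfl ?_
      intro k hk
      simp only [map_smul, smul_eq_mul]
      ring
    have hlow : (∑ k ∈ sf, |lam k|) * (s - r) ≤ g1 Sv - g2 Sv := by
      rw [← hsum, Finset.sum_mul]
      exact Finset.sum_le_sum key
    have hbound : g1 Sv - g2 Sv ≤ 2 * ‖Sv‖ := by
      have h1 : g1 Sv ≤ ‖Sv‖ := by
        calc g1 Sv ≤ |g1 Sv| := le_abs_self _
          _ ≤ ‖g1‖ * ‖Sv‖ := g1.le_opNorm _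
          _ ≤ 1 * ‖Sv‖ := mul_le_mul_of_nonneg_right hg1n (norm_nonneg _)
          _ = ‖Sv‖ := one_mul _
      have h2 : -‖Sv‖ ≤ g2 Sv := by
        have := (abs_le.mp (le_trans (g2.le_opNorm Sv |> fun h => h) (by
          exact mul_le_mul_of_nonneg_right hg2n (norm_nonneg _)))).1
        linarith [this, one_mul ‖Sv‖]
      linarith
    have hsnn : (0:ℝ) ≤ ∑ k ∈ sf, |lam k| := Finset.sum_nonneg (fun k _ => abs_nonneg _)
    calc (s - r)/2 * ∑ k ∈ sf, |lam k| = ((∑ k ∈ sf, |lam k|) * (s - r)) / 2 := by ring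
      _ ≤ (2 * ‖Sv‖) / 2 := by linarith
      _ = ‖Sv‖ := by ring
  · -- upper bound
    calc ‖∑ n ∈ sf, lam n • b (ρ n)‖ ≤ ∑ n ∈ sf, ‖lam n • b (ρ n)‖ := norm_sum_le _ _
      _ ≤ ∑ n ∈ sf, |lam n| := by
          refine Finset.sum_le_sum ?_
          intro n hn
          rw [norm_smul, Real.norm_eq_abs]
          calc |lam n| * ‖b (ρ n)‖ ≤ |lam n| * 1 :=
                mul_le_mul_of_nonneg_left (hb _) (abs_nonneg _)
            _ = |lam n| := mul_one _
      _ = 1 * ∑ n ∈ sf, |lam n| := (one_mul _).symm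

end PartB

section PartD

variable {A : Type*} [NormedRing A] [NormedAlgebra ℝ A]


variable {A : Type*} [NormedRing A] [NormedAlgebra ℝ A]

lemma Sf_apply (f : A →L[ℝ] ℝ) (x y : A) : Sf f y x = f (x * y) := rfl


/-- forward-substitution solution of the triangular system -/
noncomputable def triMu (y : ℕ → ℝ) (G : ℕ → ℕ → ℝ) : ℕ → ℕ → ℝ
  | 0 => fun _ => 0
  | (q+1) => Function.update (triMu y G q) q
      (y q - ∑ p ∈ Finset.range q, (triMu y G q) p * G p q)

noncomputable def muF (y : ℕ → ℝ) (G : ℕ → ℕ → ℝ) (q : ℕ) : ℝ := triMu y G (q+1) q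

lemma triMu_agree (y : ℕ → ℝ) (G : ℕ → ℕ → ℝ) : ∀ q i, i < q → triMu y G q i = muF y G i := by
  intro q
  induction q with
  | zero => intro i hi; omega
  | succ q ih =>
    intro i hi
    rcases Nat.lt_or_ge i q with h | h
    · show Function.update (triMu y G q) q _ i = _
      rw [Function.update_of_ne (by omega)]
      exact ih i h
    · have hiq : i = q := by omega
      subst hiq
      rfl

lemma muF_eq (y : ℕ → ℝ) (G : ℕ → ℕ → ℝ) (q : ℕ) :
    muF y G q = y q - ∑ p ∈ Finset.range q, muF y G p * G p q := by
  show Function.update (triMu y G q) q _ q = _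
  rw [Function.update_self]
  congr 1
  apply Finset.sum_congr rfl
  intro p hp
  rw [triMu_agree y G q p (Finset.mem_range.mp hp)]

/-- one step of the gliding hump -/
lemma glide_step (f : A →L[ℝ] ℝ) {ε : ℝ} (hε : 0 < ε) (a c : ℕ → A) (ha : WeaklyNull a)
    (hc : ∀ n, ‖c n‖ ≤ 1) (hdiag : ∀ n, ε < f (a n * c n))
    (m : ℕ) (t : ℕ → ℕ) (u : ℕ → A)
    (I2 : ∀ i j, i ≤ j → j < m → f (u j * c (t i)) = if j = i then 1 else 0) :
    ∃ (ts : ℕ) (us : A) (sc : ℝ),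
      (∀ i < m, t i < ts) ∧
      (∀ i < m, f (us * c (t i)) = 0) ∧ f (us * c ts) = 1 ∧
      |sc| ≤ 2/ε ∧ ‖us - sc • a ts‖ ≤ (2⁻¹:ℝ)^m := by
  classical
  -- constants (kept opaque)
  obtain ⟨L, hLdef⟩ : ∃ L : ℝ, L = 1 + ∑ p ∈ Finset.range m, ‖f‖ * ‖u p‖ := ⟨_, rfl⟩
  have hsum0 : (0:ℝ) ≤ ∑ p ∈ Finset.range m, ‖f‖ * ‖u p‖ :=
    Finset.sum_nonneg (fun p _ => mul_nonneg (norm_nonneg _) (norm_nonneg _))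
  have hL1 : 1 ≤ L := by rw [hLdef]; linarith
  have hL0 : 0 ≤ L := by linarith
  obtain ⟨Lam, hLamdef⟩ : ∃ Lam : ℝ, Lam = ∑ q ∈ Finset.range m, L^q := ⟨_, rfl⟩
  have hLam0 : 0 ≤ Lam := by
    rw [hLamdef]; exact Finset.sum_nonneg (fun q _ => pow_nonneg hL0 q)
  have hLamq : ∀ q < m, L^q ≤ Lam := by
    intro q hq
    rw [hLamdef]
    exact Finset.single_le_sum (f := fun q => L^q) (fun p _ => pow_nonneg hL0 p)
      (Finset.mem_range.mpr hq)
  obtain ⟨U, hUdef⟩ : ∃ U : ℝ, U = 1 + ∑ q ∈ Finset.range m, ‖u q‖ := ⟨_, rfl⟩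
  have hsum1 : (0:ℝ) ≤ ∑ q ∈ Finset.range m, ‖u q‖ :=
    Finset.sum_nonneg (fun q _ => norm_nonneg _)
  have hU1 : 1 ≤ U := by rw [hUdef]; linarith
  have hUq : ∀ q < m, ‖u q‖ ≤ U := by
    intro q hq
    rw [hUdef]
    have h1 : ‖u q‖ ≤ ∑ p ∈ Finset.range m, ‖u p‖ :=
      Finset.single_le_sum (f := fun p => ‖u p‖) (fun p _ => norm_nonneg _)
        (Finset.mem_range.mpr hq)
    linarith
  -- choose δ
  obtain ⟨δ, hδ0, hδbound⟩ : ∃ δ : ℝ, 0 < δ ∧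
      (δ/ε) * Lam * (1 + ‖f‖) * U ≤ min ((2⁻¹:ℝ)^(m+1)) 2⁻¹ := by
    set C0 : ℝ := Lam * (1+‖f‖) * U / ε with hC0
    have hC00 : 0 ≤ C0 := by
      apply div_nonneg _ hε.le
      apply mul_nonneg (mul_nonneg hLam0 (by positivity)) (by linarith)
    refine ⟨min ((2⁻¹:ℝ)^(m+1)) 2⁻¹ / (C0 + 1), by positivity, ?_⟩
    have hmin0 : (0:ℝ) < min ((2⁻¹:ℝ)^(m+1)) 2⁻¹ := lt_min (by positivity) (by norm_num)
    have hkey : (min ((2⁻¹:ℝ)^(m+1)) 2⁻¹ / (C0 + 1)) * C0 ≤ min ((2⁻¹:ℝ)^(m+1)) 2⁻¹ := by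
      rw [div_mul_eq_mul_div, div_le_iff₀ (by linarith)]
      nlinarith
    calc (min ((2⁻¹:ℝ)^(m+1)) 2⁻¹ / (C0 + 1))/ε * Lam * (1 + ‖f‖) * U
        = (min ((2⁻¹:ℝ)^(m+1)) 2⁻¹ / (C0 + 1)) * C0 := by
          rw [hC0]; field_simp
      _ ≤ min ((2⁻¹:ℝ)^(m+1)) 2⁻¹ := hkey
  -- choose ts
  obtain ⟨ts, hts1, hts2⟩ : ∃ ts, (∀ i ∈ Finset.range m, t i < ts) ∧
      (∀ i ∈ Finset.range m, |f (a ts * c (t i))| < δ) := by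
    have h1 : ∀ᶠ j in atTop, ∀ i ∈ Finset.range m, t i < j := by
      rw [Filter.eventually_all_finset]
      intro i _
      exact eventually_gt_atTop (t i)
    have h2 : ∀ᶠ j in atTop, ∀ i ∈ Finset.range m, |f (a j * c (t i))| < δ := by
      rw [Filter.eventually_all_finset]
      intro i _
      have h3 : Tendsto (fun j => f (a j * c (t i))) atTop (𝓝 0) := by
        have h4 := ha (Sf f (c (t i)))
        simpa only [Sf_apply] using h4
      obtain ⟨N, hN⟩ := Metric.tendsto_atTop.mp h3 δ hδ0
      rw [Filter.eventually_atTop]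
      refine ⟨N, fun j hj => ?_⟩
      have h5 := hN j hj
      rwa [Real.dist_eq, sub_zero] at h5
    obtain ⟨j, hj1, hj2⟩ := (h1.and h2).exists
    exact ⟨j, hj1, hj2⟩
  obtain ⟨d, hddef⟩ : ∃ d : ℝ, d = f (a ts * c ts) := ⟨_, rfl⟩
  have hdε : ε < d := by rw [hddef]; exact hdiag ts
  have hd0 : d ≠ 0 := ne_of_gt (hε.trans hdε)
  obtain ⟨ut, hutdef⟩ : ∃ ut : A, ut = d⁻¹ • a ts := ⟨_, rfl⟩
  obtain ⟨y, hydef⟩ : ∃ y : ℕ → ℝ, y = fun q => f (ut * c (t q)) := ⟨_, rfl⟩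
  have hyval : ∀ q, y q = d⁻¹ * f (a ts * c (t q)) := by
    intro q
    rw [hydef]
    simp only [hutdef, smul_mul_assoc, map_smul, smul_eq_mul]
  have hybound : ∀ q < m, |y q| ≤ δ / ε := by
    intro q hq
    rw [hyval, abs_mul, abs_inv]
    have h1 : |f (a ts * c (t q))| ≤ δ := (hts2 q (Finset.mem_range.mpr hq)).le
    have h2 : ε ≤ |d| := by rw [abs_of_pos (hε.trans hdε)]; exact hdε.le
    have h3 : |d|⁻¹ ≤ ε⁻¹ := inv_anti₀ hε h2
    calc |d|⁻¹ * |f (a ts * c (t q))| ≤ ε⁻¹ * δ :=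
          mul_le_mul h3 h1 (abs_nonneg _) (by positivity)
      _ = δ / ε := by rw [div_eq_inv_mul]
  obtain ⟨G, hGdef⟩ : ∃ G : ℕ → ℕ → ℝ, G = fun p q => f (u p * c (t q)) := ⟨_, rfl⟩
  have hGbound : ∀ p, ∀ q, |G p q| ≤ ‖f‖ * ‖u p‖ := by
    intro p q
    rw [hGdef]
    calc |f (u p * c (t q))| ≤ ‖f‖ * ‖u p * c (t q)‖ := f.le_opNorm _
      _ ≤ ‖f‖ * (‖u p‖ * ‖c (t q)‖) :=
          mul_le_mul_of_nonneg_left (norm_mul_le _ _) (norm_nonneg _)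
      _ ≤ ‖f‖ * (‖u p‖ * 1) := by
          apply mul_le_mul_of_nonneg_left _ (norm_nonneg _)
          exact mul_le_mul_of_nonneg_left (hc _) (norm_nonneg _)
      _ = ‖f‖ * ‖u p‖ := by ring
  -- the triangular coefficients
  obtain ⟨μ, hμeq⟩ : ∃ μ : ℕ → ℝ, ∀ q, μ q = y q - ∑ p ∈ Finset.range q, μ p * G p q := by
    refine ⟨muF y G, fun q => ?_⟩
    exact muF_eq y G q
  have hδε : (0:ℝ) ≤ δ/ε := by positivity
  -- bound on μ
  have hμb : ∀ q, q < m → |μ q| ≤ (δ/ε) * L^q := by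
    intro q
    induction q using Nat.strong_induction_on with
    | _ q ih =>
      intro hq
      rw [hμeq q]
      have h1 : |y q - ∑ p ∈ Finset.range q, μ p * G p q| ≤
          |y q| + ∑ p ∈ Finset.range q, |μ p| * |G p q| := by
        calc |y q - ∑ p ∈ Finset.range q, μ p * G p q|
            ≤ |y q| + |∑ p ∈ Finset.range q, μ p * G p q| := abs_sub _ _
          _ ≤ |y q| + ∑ p ∈ Finset.range q, |μ p * G p q| := by
              have h2 := Finset.abs_sum_le_sum_abs (fun p => μ p * G p q) (Finset.range q)
              linarith
          _ = |y q| + ∑ p ∈ Finset.range q, |μ p| * |G p q| := by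
              congr 1
              exact Finset.sum_congr rfl (fun p _ => abs_mul _ _)
      rcases Nat.eq_zero_or_pos q with rfl | hq0
      · simpa using le_trans h1 (by simpa using hybound 0 hq)
      · obtain ⟨q', rfl⟩ := Nat.exists_eq_succ_of_ne_zero hq0.ne'
        have h2 : ∑ p ∈ Finset.range (q'+1), |μ p| * |G p (q'+1)| ≤
            (δ/ε) * L^q' * ∑ p ∈ Finset.range m, ‖f‖ * ‖u p‖ := by
          have hLq' : (0:ℝ) ≤ (δ/ε) * L^q' := mul_nonneg hδε (pow_nonneg hL0 q')
          have h3 : ∀ p ∈ Finset.range (q'+1), |μ p| * |G p (q'+1)| ≤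
              ((δ/ε) * L^q') * (‖f‖ * ‖u p‖) := by
            intro p hp
            rw [Finset.mem_range] at hp
            have hpm : p < m := by omega
            have h4 := ih p (by omega) hpm
            have h5 := hGbound p (q'+1)
            have h6 : |μ p| ≤ (δ/ε) * L^q' := by
              refine le_trans h4 ?_
              exact mul_le_mul_of_nonneg_left (pow_le_pow_right₀ hL1 (by omega)) hδε
            exact mul_le_mul h6 h5 (abs_nonneg _) hLq'
          calc ∑ p ∈ Finset.range (q'+1), |μ p| * |G p (q'+1)|
              ≤ ∑ p ∈ Finset.range (q'+1), ((δ/ε) * L^q') * (‖f‖ * ‖u p‖) :=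
                Finset.sum_le_sum h3
            _ = (δ/ε) * L^q' * ∑ p ∈ Finset.range (q'+1), ‖f‖ * ‖u p‖ := by
                rw [Finset.mul_sum]
            _ ≤ (δ/ε) * L^q' * ∑ p ∈ Finset.range m, ‖f‖ * ‖u p‖ := by
                apply mul_le_mul_of_nonneg_left _ hLq'
                apply Finset.sum_le_sum_of_subset_of_nonneg
                · exact Finset.range_subset_range.mpr (by omega)
                · intro p _ _
                  exact mul_nonneg (norm_nonneg _) (norm_nonneg _)
        have h7 := hybound (q'+1) hq
        have h8 : (1:ℝ) ≤ L^q' := one_le_pow₀ hL1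
        have h9 : (δ/ε) + (δ/ε) * L^q' * ∑ p ∈ Finset.range m, ‖f‖ * ‖u p‖ ≤
            (δ/ε) * L^(q'+1) := by
          have h10 : L^(q'+1) = L^q' * L := pow_succ L q'
          have hS : ∑ p ∈ Finset.range m, ‖f‖ * ‖u p‖ = L - 1 := by rw [hLdef]; ring
          rw [h10, hS]
          nlinarith [mul_nonneg hδε (sub_nonneg.mpr h8)]
        calc |y (q'+1) - ∑ p ∈ Finset.range (q'+1), μ p * G p (q'+1)| ≤
            |y (q'+1)| + ∑ p ∈ Finset.range (q'+1), |μ p| * |G p (q'+1)| := h1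
          _ ≤ (δ/ε) + (δ/ε) * L^q' * ∑ p ∈ Finset.range m, ‖f‖ * ‖u p‖ := by linarith
          _ ≤ (δ/ε) * L^(q'+1) := h9
  -- total smallness
  have hSb : ∑ q ∈ Finset.range m, |μ q| * (‖f‖ * ‖u q‖) ≤ min ((2⁻¹:ℝ)^(m+1)) 2⁻¹ ∧
      ∑ q ∈ Finset.range m, |μ q| * ‖u q‖ ≤ min ((2⁻¹:ℝ)^(m+1)) 2⁻¹ := by
    have key : ∀ q ∈ Finset.range m, |μ q| * (‖f‖ * ‖u q‖) ≤ ((δ/ε) * L^q) * ((1+‖f‖) * U) ∧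
        |μ q| * ‖u q‖ ≤ ((δ/ε) * L^q) * ((1+‖f‖) * U) := by
      intro q hq
      rw [Finset.mem_range] at hq
      have h1 := hμb q hq
      have h2 := hUq q hq
      have h3 : (0:ℝ) ≤ |μ q| := abs_nonneg _
      have h4 : (0:ℝ) ≤ ‖f‖ := norm_nonneg _
      have h5 : (0:ℝ) ≤ ‖u q‖ := norm_nonneg _
      constructor
      · calc |μ q| * (‖f‖ * ‖u q‖) ≤ ((δ/ε) * L^q) * (‖f‖ * ‖u q‖) :=
              mul_le_mul_of_nonneg_right h1 (by positivity)
          _ ≤ ((δ/ε) * L^q) * ((1+‖f‖) * U) := by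
              apply mul_le_mul_of_nonneg_left _ (mul_nonneg hδε (pow_nonneg hL0 q))
              apply mul_le_mul (by linarith) h2 h5 (by linarith)
      · calc |μ q| * ‖u q‖ ≤ ((δ/ε) * L^q) * ‖u q‖ :=
              mul_le_mul_of_nonneg_right h1 h5
          _ ≤ ((δ/ε) * L^q) * ((1+‖f‖) * U) := by
              apply mul_le_mul_of_nonneg_left _ (mul_nonneg hδε (pow_nonneg hL0 q))
              nlinarith
    have hsum : ∑ q ∈ Finset.range m, ((δ/ε) * L^q) * ((1+‖f‖) * U) ≤
        min ((2⁻¹:ℝ)^(m+1)) 2⁻¹ := by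
      have h1 : ∑ q ∈ Finset.range m, ((δ/ε) * L^q) * ((1+‖f‖) * U) =
          (δ/ε) * Lam * (1 + ‖f‖) * U := by
        rw [hLamdef]
        simp only [Finset.mul_sum, Finset.sum_mul]
        apply Finset.sum_congr rfl
        intro q _
        ring
      rw [h1]
      exact hδbound
    constructor
    · calc ∑ q ∈ Finset.range m, |μ q| * (‖f‖ * ‖u q‖)
          ≤ ∑ q ∈ Finset.range m, ((δ/ε) * L^q) * ((1+‖f‖) * U) :=
            Finset.sum_le_sum (fun q hq => (key q hq).1)
        _ ≤ _ := hsum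
    · calc ∑ q ∈ Finset.range m, |μ q| * ‖u q‖
          ≤ ∑ q ∈ Finset.range m, ((δ/ε) * L^q) * ((1+‖f‖) * U) :=
            Finset.sum_le_sum (fun q hq => (key q hq).2)
        _ ≤ _ := hsum
  -- define z and D
  obtain ⟨z, hzdef⟩ : ∃ z : A, z = ut - ∑ q ∈ Finset.range m, μ q • u q := ⟨_, rfl⟩
  have hz_apply : ∀ x : A, f (z * x) = f (ut * x) - ∑ q ∈ Finset.range m, μ q * f (u q * x) := by
    intro x
    rw [hzdef, sub_mul, map_sub, Finset.sum_mul, map_sum]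
    congr 1
    apply Finset.sum_congr rfl
    intro q _
    rw [smul_mul_assoc, map_smul, smul_eq_mul]
  obtain ⟨D, hDdef⟩ : ∃ D : ℝ, D = f (z * c ts) := ⟨_, rfl⟩
  have hut_ts : f (ut * c ts) = 1 := by
    rw [hutdef, smul_mul_assoc, map_smul, smul_eq_mul, ← hddef, inv_mul_cancel₀ hd0]
  have hD1 : |D - 1| ≤ 2⁻¹ := by
    rw [hDdef, hz_apply, hut_ts]
    have h1 : |(1 : ℝ) - ∑ q ∈ Finset.range m, μ q * f (u q * c ts) - 1| =
        |∑ q ∈ Finset.range m, μ q * f (u q * c ts)| := by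
      rw [sub_sub_cancel_left, abs_neg]
    rw [h1]
    calc |∑ q ∈ Finset.range m, μ q * f (u q * c ts)|
        ≤ ∑ q ∈ Finset.range m, |μ q * f (u q * c ts)| :=
          Finset.abs_sum_le_sum_abs _ _
      _ ≤ ∑ q ∈ Finset.range m, |μ q| * (‖f‖ * ‖u q‖) := by
          apply Finset.sum_le_sum
          intro q _
          rw [abs_mul]
          apply mul_le_mul_of_nonneg_left _ (abs_nonneg _)
          calc |f (u q * c ts)| ≤ ‖f‖ * ‖u q * c ts‖ := f.le_opNorm _
            _ ≤ ‖f‖ * (‖u q‖ * ‖c ts‖) :=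
                mul_le_mul_of_nonneg_left (norm_mul_le _ _) (norm_nonneg _)
            _ ≤ ‖f‖ * (‖u q‖ * 1) := by
                apply mul_le_mul_of_nonneg_left _ (norm_nonneg _)
                exact mul_le_mul_of_nonneg_left (hc _) (norm_nonneg _)
            _ = ‖f‖ * ‖u q‖ := by ring
      _ ≤ min ((2⁻¹:ℝ)^(m+1)) 2⁻¹ := hSb.1
      _ ≤ 2⁻¹ := min_le_right _ _
  have hDhalf : (2⁻¹:ℝ) ≤ |D| := by
    rcases abs_le.mp hD1 with ⟨h1, h2⟩
    rw [abs_of_pos (by linarith)]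
    linarith
  have hD0 : D ≠ 0 := by
    intro h
    rw [h, abs_zero] at hDhalf
    norm_num at hDhalf
  refine ⟨ts, D⁻¹ • z, D⁻¹ * d⁻¹, ?_, ?_, ?_, ?_, ?_⟩
  · intro i hi
    exact hts1 i (Finset.mem_range.mpr hi)
  · -- zeros on earlier w's
    intro i hi
    rw [smul_mul_assoc, map_smul, smul_eq_mul]
    have hzero : f (z * c (t i)) = 0 := by
      rw [hz_apply]
      have hy_i : f (ut * c (t i)) = y i := by rw [hydef]
      have hsplit : ∑ q ∈ Finset.range m, μ q * f (u q * c (t i)) =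
          ∑ q ∈ Finset.range (i+1), μ q * f (u q * c (t i)) +
          ∑ q ∈ Finset.Ico (i+1) m, μ q * f (u q * c (t i)) :=
        (Finset.sum_range_add_sum_Ico _ (by omega)).symm
      have hIco : ∑ q ∈ Finset.Ico (i+1) m, μ q * f (u q * c (t i)) = 0 := by
        apply Finset.sum_eq_zero
        intro q hq
        rw [Finset.mem_Ico] at hq
        rw [I2 i q (by omega) hq.2, if_neg (by omega), mul_zero]
      have hlast : ∑ q ∈ Finset.range (i+1), μ q * f (u q * c (t i)) =
          ∑ q ∈ Finset.range i, μ q * f (u q * c (t i)) + μ i := by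
        rw [Finset.sum_range_succ, I2 i i (le_refl i) hi, if_pos rfl, mul_one]
      have hGq : ∀ q, f (u q * c (t i)) = G q i := by intro q; rw [hGdef]
      rw [hy_i, hsplit, hIco, hlast, hμeq i, add_zero]
      have : ∑ q ∈ Finset.range i, μ q * f (u q * c (t i)) =
          ∑ p ∈ Finset.range i, μ p * G p i := by
        apply Finset.sum_congr rfl
        intro q _
        rw [hGq]
      rw [this]
      ring
    rw [hzero, mul_zero]
  · rw [smul_mul_assoc, map_smul, smul_eq_mul, ← hDdef, inv_mul_cancel₀ hD0]
  · -- |sc| ≤ 2/ε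
    rw [abs_mul, abs_inv, abs_inv]
    have h1 : |D|⁻¹ ≤ 2 := by
      rw [← inv_inv (2:ℝ)]
      exact inv_anti₀ (by norm_num) hDhalf
    have h2 : |d|⁻¹ ≤ ε⁻¹ := by
      apply inv_anti₀ hε
      rw [abs_of_pos (hε.trans hdε)]
      exact hdε.le
    calc |D|⁻¹ * |d|⁻¹ ≤ 2 * ε⁻¹ := by
          apply mul_le_mul h1 h2 (by positivity) (by norm_num)
      _ = 2/ε := by rw [div_eq_mul_inv]
  · -- norm estimate
    have heq : D⁻¹ • z - (D⁻¹ * d⁻¹) • a ts = D⁻¹ • (z - ut) := by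
      rw [smul_sub, hutdef, smul_smul]
    rw [heq, norm_smul, Real.norm_eq_abs, abs_inv]
    have hnorm : ‖z - ut‖ ≤ min ((2⁻¹:ℝ)^(m+1)) 2⁻¹ := by
      rw [hzdef]
      have h1 : ut - ∑ q ∈ Finset.range m, μ q • u q - ut = -(∑ q ∈ Finset.range m, μ q • u q) := by
        abel
      rw [h1, norm_neg]
      calc ‖∑ q ∈ Finset.range m, μ q • u q‖ ≤ ∑ q ∈ Finset.range m, ‖μ q • u q‖ :=
            norm_sum_le _ _
        _ = ∑ q ∈ Finset.range m, |μ q| * ‖u q‖ := by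
            apply Finset.sum_congr rfl
            intro q _
            rw [norm_smul, Real.norm_eq_abs]
        _ ≤ min ((2⁻¹:ℝ)^(m+1)) 2⁻¹ := hSb.2
    have h2 : |D|⁻¹ ≤ 2 := by
      rw [← inv_inv (2:ℝ)]
      exact inv_anti₀ (by norm_num) hDhalf
    calc |D|⁻¹ * ‖z - ut‖ ≤ 2 * ((2⁻¹:ℝ)^(m+1)) := by
          apply mul_le_mul h2 (hnorm.trans (min_le_left _ _)) (norm_nonneg _) (by norm_num)
      _ = (2⁻¹:ℝ)^m := by
          rw [pow_succ]
          ring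

/-- the full gliding-hump construction -/
lemma glide (f : A →L[ℝ] ℝ) {ε : ℝ} (hε : 0 < ε) (a c : ℕ → A) (ha : WeaklyNull a)
    (hc : ∀ n, ‖c n‖ ≤ 1) (hdiag : ∀ n, ε < f (a n * c n)) :
    ∃ (t : ℕ → ℕ) (u : ℕ → A), StrictMono t ∧ WeaklyNull u ∧
      ∀ m n, n ≤ m → f (u m * c (t n)) = if m = n then 1 else 0 := by
  classical
  set Good : (ℕ → ℕ) × (ℕ → A) × ℕ → Prop := fun q =>
    (∀ i j, i < j → j < q.2.2 → q.1 i < q.1 j) ∧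
    (∀ i j, i ≤ j → j < q.2.2 → f (q.2.1 j * c (q.1 i)) = if j = i then 1 else 0) ∧
    (∀ j < q.2.2, ∃ sc : ℝ, |sc| ≤ 2/ε ∧ ‖q.2.1 j - sc • a (q.1 j)‖ ≤ (2⁻¹:ℝ)^j) with hGood
  have init : Good (fun _ => 0, fun _ => 0, 0) := by
    refine ⟨?_, ?_, ?_⟩
    · intro i j _ hj; exact absurd hj (Nat.not_lt_zero j)
    · intro i j _ hj; exact absurd hj (Nat.not_lt_zero j)
    · intro j hj; exact absurd hj (Nat.not_lt_zero j)
  have step : ∀ (k : ℕ) (s : {q : (ℕ → ℕ) × (ℕ → A) × ℕ // Good q}),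
      ∃ s' : {q : (ℕ → ℕ) × (ℕ → A) × ℕ // Good q},
        s'.1.2.2 = s.1.2.2 + 1 ∧
        ∀ i < s.1.2.2, s'.1.1 i = s.1.1 i ∧ s'.1.2.1 i = s.1.2.1 i := by
    intro k s
    obtain ⟨hI1, hI2, hI3⟩ := s.2
    obtain ⟨ts, us, sc, hts, hzeros, hone, hsc, hnorm⟩ :=
      glide_step f hε a c ha hc hdiag s.1.2.2 s.1.1 s.1.2.1 hI2
    set m := s.1.2.2 with hm
    set T := s.1.1 with hT
    set Uu := s.1.2.1 with hUu
    refine ⟨⟨(Function.update T m ts, Function.update Uu m us, m+1), ?_, ?_, ?_⟩, rfl, ?_⟩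
    · -- monotonicity
      dsimp only
      intro i j hij hj
      rcases Nat.lt_or_ge j m with hjm | hjm
      · rw [Function.update_of_ne (by omega), Function.update_of_ne (by omega)]
        exact hI1 i j hij hjm
      · have hjm' : j = m := by omega
        rw [hjm', Function.update_self, Function.update_of_ne (show i ≠ m by omega)]
        exact hts i (by omega)
    · -- biorthogonality
      dsimp only
      intro i j hij hj
      rcases Nat.lt_or_ge j m with hjm | hjm
      · rw [Function.update_of_ne (show j ≠ m by omega), Function.update_of_ne (show i ≠ m by omega)]
        exact hI2 i j hij hjm
      · have hjm' : j = m := by omega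
        rw [hjm', Function.update_self]
        rcases Nat.lt_or_ge i m with him | him
        · rw [Function.update_of_ne (show i ≠ m by omega), hzeros i him, if_neg (by omega)]
        · have him' : i = m := by omega
          rw [him', Function.update_self, hone, if_pos rfl]
    · -- norm control
      dsimp only
      intro j hj
      rcases Nat.lt_or_ge j m with hjm | hjm
      · obtain ⟨sc', h1, h2⟩ := hI3 j hjm
        refine ⟨sc', h1, ?_⟩
        rw [Function.update_of_ne (by omega), Function.update_of_ne (by omega)]
        exact h2
      · have hjm' : j = m := by omega
        refine ⟨sc, hsc, ?_⟩
        rw [hjm', Function.update_self, Function.update_self]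
        exact hnorm
    · dsimp only
      intro i hi
      constructor
      · rw [Function.update_of_ne (by omega)]
      · rw [Function.update_of_ne (by omega)]
  obtain ⟨g, hg0, hgs⟩ := dc' (⟨(fun _ => 0, fun _ => 0, 0), init⟩ :
    {q : (ℕ → ℕ) × (ℕ → A) × ℕ // Good q}) _ step
  have hgm : ∀ k, (g k).1.2.2 = k := by
    intro k
    induction k with
    | zero => rw [hg0]
    | succ k ih => rw [(hgs k).1, ih]
  set t : ℕ → ℕ := fun i => (g (i+1)).1.1 i with ht
  set u : ℕ → A := fun i => (g (i+1)).1.2.1 i with hu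
  have hagree : ∀ k i, i < k → (g k).1.1 i = t i ∧ (g k).1.2.1 i = u i := by
    intro k
    induction k with
    | zero => intro i hi; omega
    | succ k ih =>
      intro i hi
      rcases Nat.lt_or_ge i k with h | h
      · have hs := (hgs k).2 i (by rw [hgm k]; exact h)
        obtain ⟨ih1, ih2⟩ := ih i h
        exact ⟨hs.1.trans ih1, hs.2.trans ih2⟩
      · have : i = k := by omega
        subst this
        exact ⟨rfl, rfl⟩
  have hGoodk : ∀ k, Good (g k).1 := fun k => (g k).2
  have htmono : StrictMono t := by
    apply strictMono_nat_of_lt_succ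
    intro k
    have h1 := (hGoodk (k+2)).1 k (k+1) (by omega) (by rw [hgm]; omega)
    rwa [(hagree (k+2) k (by omega)).1, (hagree (k+2) (k+1) (by omega)).1] at h1
  have hbio : ∀ m n, n ≤ m → f (u m * c (t n)) = if m = n then 1 else 0 := by
    intro m n hnm
    have h1 := (hGoodk (m+1)).2.1 n m hnm (by rw [hgm]; omega)
    rwa [(hagree (m+1) n (by omega)).1, (hagree (m+1) m (by omega)).2] at h1
  have hsc : ∀ j, ∃ sc : ℝ, |sc| ≤ 2/ε ∧ ‖u j - sc • a (t j)‖ ≤ (2⁻¹:ℝ)^j := by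
    intro j
    have h1 := (hGoodk (j+1)).2.2 j (by rw [hgm]; omega)
    rwa [(hagree (j+1) j (by omega)).1, (hagree (j+1) j (by omega)).2] at h1
  choose sc hsc1 hsc2 using hsc
  refine ⟨t, u, htmono, ?_, hbio⟩
  -- weak nullity of u
  intro g0
  have hbound : ∀ j, ‖g0 (u j)‖ ≤ ‖g0‖ * (2⁻¹:ℝ)^j + (2/ε) * |g0 (a (t j))| := by
    intro j
    have h1 : g0 (u j) = g0 (u j - sc j • a (t j)) + sc j * g0 (a (t j)) := by
      rw [map_sub, map_smul, smul_eq_mul]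
      ring
    rw [h1]
    calc ‖g0 (u j - sc j • a (t j)) + sc j * g0 (a (t j))‖
        ≤ ‖g0 (u j - sc j • a (t j))‖ + ‖sc j * g0 (a (t j))‖ := norm_add_le _ _
      _ ≤ ‖g0‖ * (2⁻¹:ℝ)^j + (2/ε) * |g0 (a (t j))| := by
          apply add_le_add
          · calc ‖g0 (u j - sc j • a (t j))‖ ≤ ‖g0‖ * ‖u j - sc j • a (t j)‖ := g0.le_opNorm _
              _ ≤ ‖g0‖ * (2⁻¹:ℝ)^j := mul_le_mul_of_nonneg_left (hsc2 j) (norm_nonneg _)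
          · rw [Real.norm_eq_abs, abs_mul]
            exact mul_le_mul_of_nonneg_right (hsc1 j) (abs_nonneg _)
  have htend : Tendsto (fun j => ‖g0‖ * (2⁻¹:ℝ)^j + (2/ε) * |g0 (a (t j))|) atTop (𝓝 0) := by
    have h1 : Tendsto (fun j => ‖g0‖ * (2⁻¹:ℝ)^j) atTop (𝓝 0) := by
      have := tendsto_pow_atTop_nhds_zero_of_lt_one (by norm_num : (0:ℝ) ≤ 2⁻¹) (by norm_num)
      simpa using this.const_mul ‖g0‖
    have h2 : Tendsto (fun j => (2/ε) * |g0 (a (t j))|) atTop (𝓝 0) := by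
      have h3 : Tendsto (fun j => g0 (a (t j))) atTop (𝓝 0) :=
        (ha g0).comp htmono.tendsto_atTop
      have h4 : Tendsto (fun j => |g0 (a (t j))|) atTop (𝓝 0) := by
        have := h3.abs
        simpa using this
      simpa using h4.const_mul (2/ε)
    simpa using h1.add h2
  exact squeeze_zero_norm hbound htend


end PartD

section Final

variable {A : Type*} [NormedRing A] [NormedAlgebra ℝ A]

lemma Tf_apply (f : A →L[ℝ] ℝ) (x y : A) : Tf f x y = f (x * y) := rfl

/-- From non complete continuity extract the basic data. -/
lemma setup (f : A →L[ℝ] ℝ) (hncc : ¬ CompletelyContinuous (Tf f)) :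
    ∃ ε : ℝ, 0 < ε ∧ ∃ a b : ℕ → A, WeaklyNull a ∧ (∀ n, ‖b n‖ ≤ 1) ∧
      ∀ n, ε < f (a n * b n) := by
  rw [CompletelyContinuous] at hncc
  push_neg at hncc
  obtain ⟨x, hxw, hxt⟩ := hncc
  have hfreq : ∃ ε > (0:ℝ), ∃ᶠ n in atTop, ε ≤ ‖Tf f (x n)‖ := by
    by_contra hcon
    push_neg at hcon
    apply hxt
    rw [Metric.tendsto_atTop]
    intro ε hε
    have h1 := hcon (ε/2) (by linarith)
    rw [Filter.eventually_atTop] at h1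
    obtain ⟨N, hN⟩ := h1
    refine ⟨N, fun n hn => ?_⟩
    rw [Real.dist_eq, sub_zero, abs_of_nonneg (norm_nonneg _)]
    have := hN n hn
    linarith
  obtain ⟨ε, hε, hfr⟩ := hfreq
  obtain ⟨φ, hφ, hφ2⟩ := Filter.extraction_of_frequently_atTop hfr
  have haw : WeaklyNull (fun n => x (φ n)) := fun g => (hxw g).comp hφ.tendsto_atTop
  have hex : ∀ n, ∃ yb : A, ‖yb‖ ≤ 1 ∧ ε/2 < f (x (φ n) * yb) := by
    intro n
    have h1 : ε/2 < ‖Tf f (x (φ n))‖ := by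
      have := hφ2 n
      linarith
    obtain ⟨yy, hy1, hy2⟩ := (Tf f (x (φ n))).exists_lt_apply_of_lt_opNorm h1
    rw [Tf_apply] at hy2
    rcases le_or_gt 0 (f (x (φ n) * yy)) with h | h
    · refine ⟨yy, hy1.le, ?_⟩
      rwa [Real.norm_eq_abs, abs_of_nonneg h] at hy2
    · refine ⟨-yy, by rw [norm_neg]; exact hy1.le, ?_⟩
      rw [mul_neg, map_neg]
      rw [Real.norm_eq_abs, abs_of_neg h] at hy2
      linarith
  choose bb hb1 hb2 using hex
  exact ⟨ε/2, by linarith, fun n => x (φ n), bb, haw, hb1, hb2⟩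

/-- No subsequence of `b` is weakly Cauchy. -/
lemma no_wc (f : A →L[ℝ] ℝ)
    (hwpL : ∀ x y : ℕ → A, WeaklyNull x → WeaklyNull y →
      Tendsto (fun n => f (x n * y n)) atTop (𝓝 0))
    {ε : ℝ} (hε : 0 < ε) {a b : ℕ → A} (ha : WeaklyNull a)
    (hab : ∀ n, ε < f (a n * b n))
    (m : ℕ → ℕ) (hm : StrictMono m) : ¬ WeaklyCauchy (fun k => b (m k)) := by
  intro hwc
  have hex : ∀ k, ∃ N, ∀ j ≥ N, |f (a (m j) * b (m k))| < ε/2 := by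
    intro k
    have h0 : Tendsto (fun j => f (a (m j) * b (m k))) atTop (𝓝 0) := by
      have h1 := ha (Sf f (b (m k)))
      have h2 := h1.comp hm.tendsto_atTop
      simpa only [Function.comp_def, Sf_apply] using h2
    obtain ⟨N, hN⟩ := Metric.tendsto_atTop.mp h0 (ε/2) (by linarith)
    refine ⟨N, fun j hj => ?_⟩
    have := hN j hj
    rwa [Real.dist_eq, sub_zero] at this
  choose N hN using hex
  have hptend : Tendsto (fun k => max k (N k)) atTop atTop :=
    tendsto_atTop_mono (fun k => le_max_left _ _) tendsto_id
  have hxw : WeaklyNull (fun k => a (m (max k (N k)))) := fun g =>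
    (ha g).comp (hm.tendsto_atTop.comp hptend)
  have hyw : WeaklyNull (fun k => b (m (max k (N k))) - b (m k)) := by
    intro g
    obtain ⟨L, hL⟩ := hwc g
    have h1 : Tendsto (fun k => g (b (m (max k (N k))))) atTop (𝓝 L) := hL.comp hptend
    have h2 := h1.sub hL
    simpa only [map_sub, sub_self] using h2
  have hcontr := hwpL _ _ hxw hyw
  have hlb : ∀ k, ε/2 < f (a (m (max k (N k))) * (b (m (max k (N k))) - b (m k))) := by
    intro k
    have e1 : f (a (m (max k (N k))) * (b (m (max k (N k))) - b (m k))) =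
        f (a (m (max k (N k))) * b (m (max k (N k)))) - f (a (m (max k (N k))) * b (m k)) := by
      rw [mul_sub, map_sub]
    have h1 := hab (m (max k (N k)))
    have h2 := hN k (max k (N k)) (le_max_right k (N k))
    rw [e1]
    rcases abs_lt.mp h2 with ⟨h3, h4⟩
    linarith
  obtain ⟨K, hK⟩ := Metric.tendsto_atTop.mp hcontr (ε/2) (by linarith)
  have h5 := hK K (le_refl K)
  rw [Real.dist_eq, sub_zero] at h5
  rcases abs_lt.mp h5 with ⟨h6, h7⟩
  have := hlb K
  linarith

end Final

end RosAux

theorem exists_l1_sequence_of_wpL_not_cc {A : Type*} [NormedRing A] [NormedAlgebra ℝ A]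
    [CompleteSpace A] (f : A →L[ℝ] ℝ)
    (hwpL : ∀ x y : ℕ → A, WeaklyNull x → WeaklyNull y →
      Tendsto (fun n => f (x n * y n)) atTop (𝓝 0))
    (hncc : ¬ CompletelyContinuous (Tf f)) :
    ∃ w u : ℕ → A, IsL1Sequence w ∧ WeaklyNull u ∧
      ∀ m n : ℕ, n ≤ m → f (u m * w n) = if m = n then 1 else 0 := by
  classical
  obtain ⟨ε, hε, a, b, ha, hb, hab⟩ := RosAux.setup f hncc
  -- b has no weakly Cauchy subsequence
  have hnwc : ∀ m : ℕ → ℕ, StrictMono m → ¬ WeaklyCauchy (fun k => b (m k)) :=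
    fun m hm => RosAux.no_wc f hwpL hε ha hab m hm
  -- Rosenthal: get an ℓ¹-independence structure
  obtain ⟨r, s, hrs, T, hTinf, hind⟩ := RosAux.rosenthal_l1 b hb hnwc
  -- enumerate T
  set ν : ℕ → ℕ := Nat.nth (· ∈ T) with hν
  have hνmono : StrictMono ν := Nat.nth_strictMono hTinf
  have hνT : ∀ k, ν k ∈ T := fun k => Nat.nth_mem_of_infinite hTinf k
  -- glide on the subsequence
  have haν : WeaklyNull (fun k => a (ν k)) := fun g => (ha g).comp hνmono.tendsto_atTop
  have hdiagν : ∀ k, ε < f (a (ν k) * b (ν k)) := fun k => hab (ν k)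
  obtain ⟨t, u, htmono, huw, hbio⟩ := RosAux.glide f hε (fun k => a (ν k)) (fun k => b (ν k))
    haν (fun k => hb (ν k)) hdiagν
  refine ⟨fun n => b (ν (t n)), u, ?_, huw, ?_⟩
  · exact RosAux.l1_of_indep b hb hrs hind (fun n => ν (t n))
      (fun i j hij => htmono.injective (hνmono.injective hij)) (fun k => hνT (t k))
  · intro m n hnm
    exact hbio m n hnm
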